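/- If n = a·d + b where a ≥ 1, d ≥ 1 and 0 ≤ b < d, then P(n, d) ≥ ((a+1)!)^b · (a!)^{d−b}. -/
import Mathlib


/-- The Chebyshev distance between two permutations of `{1,…,n}`
(represented as permutations of `Fin n`): `max_i |σ(i) − τ(i)|`. -/
def permDist {n : ℕ} (σ τ : Equiv.Perm (Fin n)) : ℕ :=
  Finset.univ.sup fun i => Nat.dist (σ i : ℕ) (τ i : ℕ)

/-- `P n d` is the maximum cardinality of a set of permutations of `{1,…,n}`
whose pairwise Chebyshev distance is at least `d`. -/
noncomputable def P (n d : ℕ) : ℕ :=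
  sSup {k | ∃ A : Finset (Equiv.Perm (Fin n)),
    (∀ σ ∈ A, ∀ τ ∈ A, σ ≠ τ → d ≤ permDist σ τ) ∧ A.card = k}

lemma count_card_aux {n d : ℕ} (hd : 0 < d) (r : ℕ) (hr : r < d) :
    Fintype.card {i : Fin n // (i : ℕ) % d = r} =
      n / d + if r < n % d then 1 else 0 := by
  have h1 : Fintype.card {i : Fin n // (i : ℕ) % d = r} =
      ((Finset.range n).filter (fun x => x % d = r)).card := by
    rw [Fintype.card_subtype]
    refine Finset.card_bij (fun i _ => (i : ℕ)) ?_ ?_ ?_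
    · intro i hi
      simp only [Finset.mem_filter, Finset.mem_range]
      exact ⟨i.2, (Finset.mem_filter.mp hi).2⟩
    · intro i _ j _ h
      exact Fin.ext h
    · intro x hx
      simp only [Finset.mem_filter, Finset.mem_range] at hx
      exact ⟨⟨x, hx.1⟩, Finset.mem_filter.mpr ⟨Finset.mem_univ _, hx.2⟩, rfl⟩
  have h2 : ((Finset.range n).filter (fun x => x % d = r)).card =
      n.count (· ≡ r [MOD d]) := by
    rw [Nat.count_eq_card_filter_range]
    congr 1
    apply Finset.filter_congr
    intro x _
    simp only [Nat.ModEq, Nat.mod_eq_of_lt hr, eq_iff_iff]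
  rw [h1, h2, Nat.count_modEq_card _ hd, Nat.mod_eq_of_lt hr]

lemma card_fin_lt {d b : ℕ} (hb : b < d) :
    (Finset.univ.filter (fun r : Fin d => (r : ℕ) < b)).card = b := by
  rw [← Fintype.card_subtype]
  have hE : {r : Fin d // (r : ℕ) < b} ≃ Fin b :=
    ⟨fun x => ⟨x.1.1, x.2⟩, fun y => ⟨⟨y.1, y.2.trans hb⟩, y.2⟩,
      fun _ => rfl, fun _ => rfl⟩
  rw [Fintype.card_congr hE, Fintype.card_fin]

/-- If `n = a·d + b` with `a ≥ 1`, `d ≥ 1`, `0 ≤ b < d`, then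
`P(n, d) ≥ ((a+1)!)^b · (a!)^{d−b}`. -/
theorem stmt5 (n a d b : ℕ) (ha : 1 ≤ a) (hd : 1 ≤ d) (hb : b < d)
    (hn : n = a * d + b) :
    (Nat.factorial (a + 1)) ^ b * (Nat.factorial a) ^ (d - b) ≤ P n d := by
  have hd0 : 0 < d := hd
  -- the fiber map
  let f : Fin n → Fin d := fun i => ⟨(i : ℕ) % d, Nat.mod_lt _ hd0⟩
  let e := Equiv.sigmaFiberEquiv f
  let Φ : (∀ r : Fin d, Equiv.Perm {i : Fin n // f i = r}) → Equiv.Perm (Fin n) :=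
    fun g => e.permCongr (Equiv.Perm.sigmaCongrRight g)
  have hΦmod : ∀ g i, f (Φ g i) = f i := by
    intro g i
    have h1 : ∀ (x : Σ r : Fin d, {j : Fin n // f j = r}), f (e x) = x.1 :=
      fun x => x.2.2
    calc f (Φ g i) = (Equiv.Perm.sigmaCongrRight g (e.symm i)).1 := h1 _
      _ = (e.symm i).1 := rfl
      _ = f i := rfl
  have hinj : Function.Injective Φ := by
    intro g g' h
    have h2 : Equiv.Perm.sigmaCongrRight g = Equiv.Perm.sigmaCongrRight g' :=
      e.permCongr.injective h
    exact Equiv.Perm.sigmaCongrRightHom_injective h2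
  -- the set of permutations
  set A : Finset (Equiv.Perm (Fin n)) := Finset.univ.image Φ with hA
  have hAmem : ∀ σ ∈ A, ∀ i, f (σ i) = f i := by
    intro σ hσ i
    obtain ⟨g, _, rfl⟩ := Finset.mem_image.mp hσ
    exact hΦmod g i
  -- pairwise distance
  have hpair : ∀ σ ∈ A, ∀ τ ∈ A, σ ≠ τ → d ≤ permDist σ τ := by
    intro σ hσ τ hτ hne
    have : ∃ i, σ i ≠ τ i := by
      by_contra hc
      push_neg at hc
      exact hne (Equiv.ext hc)
    obtain ⟨i, hi⟩ := this
    have hmod : (σ i : ℕ) % d = (τ i : ℕ) % d := by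
      have := (hAmem σ hσ i).trans (hAmem τ hτ i).symm
      exact congrArg Fin.val this
    have hvne : (σ i : ℕ) ≠ (τ i : ℕ) := fun h => hi (Fin.ext h)
    have key : ∀ x y : ℕ, x % d = y % d → x < y → d ≤ Nat.dist x y := by
      intro x y hm hxy
      rw [Nat.dist_eq_sub_of_le hxy.le]
      have hdvd : d ∣ y - x := (Nat.modEq_iff_dvd' hxy.le).mp hm
      exact Nat.le_of_dvd (by omega) hdvd
    have hdist : d ≤ Nat.dist (σ i : ℕ) (τ i : ℕ) := by
      rcases Nat.lt_or_ge (σ i : ℕ) (τ i : ℕ) with h | h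
      · exact key _ _ hmod h
      · rw [Nat.dist_comm]
        exact key _ _ hmod.symm (lt_of_le_of_ne h (Ne.symm hvne))
    unfold permDist
    exact le_trans hdist
      (Finset.le_sup (f := fun j => Nat.dist (σ j : ℕ) (τ j : ℕ)) (Finset.mem_univ i))
  -- cardinality
  have hcard : A.card = (Nat.factorial (a + 1)) ^ b * (Nat.factorial a) ^ (d - b) := by
    rw [hA, Finset.card_image_of_injective _ hinj, Finset.card_univ, Fintype.card_pi]
    have hcr : ∀ r : Fin d, Fintype.card (Equiv.Perm {i : Fin n // f i = r}) =
        Nat.factorial (if (r : ℕ) < b then a + 1 else a) := by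
      intro r
      rw [Fintype.card_perm]
      congr 1
      have he : ∀ i : Fin n, f i = r ↔ (i : ℕ) % d = (r : ℕ) := by
        intro i
        constructor
        · intro h; exact congrArg Fin.val h
        · intro h; exact Fin.ext h
      rw [Fintype.card_congr (Equiv.subtypeEquivRight he)]
      rw [count_card_aux hd0 _ r.2]
      have h1 : n / d = a := by
        subst hn
        rw [add_comm, Nat.add_mul_div_right _ _ hd0, Nat.div_eq_of_lt hb]
        omega
      have h2 : n % d = b := by
        subst hn
        rw [add_comm, Nat.add_mul_mod_self_right]
        exact Nat.mod_eq_of_lt hb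
      rw [h1, h2]
      split <;> omega
    rw [Finset.prod_congr rfl (fun r _ => hcr r)]
    have : (∏ r : Fin d, Nat.factorial (if (r : ℕ) < b then a + 1 else a)) =
        ∏ r : Fin d, (if (r : ℕ) < b then Nat.factorial (a + 1) else Nat.factorial a) := by
      apply Finset.prod_congr rfl
      intro r _
      split <;> rfl
    rw [this, Finset.prod_ite, Finset.prod_const, Finset.prod_const,
      card_fin_lt hb]
    congr 2
    rw [Finset.filter_not, Finset.card_sdiff_of_subset (Finset.filter_subset _ _),
      card_fin_lt hb, Finset.card_univ, Fintype.card_fin]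
  -- conclude
  have hmem : (Nat.factorial (a + 1)) ^ b * (Nat.factorial a) ^ (d - b) ∈
      {k | ∃ B : Finset (Equiv.Perm (Fin n)),
        (∀ σ ∈ B, ∀ τ ∈ B, σ ≠ τ → d ≤ permDist σ τ) ∧ B.card = k} :=
    ⟨A, hpair, hcard⟩
  have hbdd : BddAbove {k | ∃ B : Finset (Equiv.Perm (Fin n)),
      (∀ σ ∈ B, ∀ τ ∈ B, σ ≠ τ → d ≤ permDist σ τ) ∧ B.card = k} := by
    refine ⟨Fintype.card (Equiv.Perm (Fin n)), ?_⟩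
    rintro k ⟨B, -, rfl⟩
    exact Finset.card_le_univ B
  exact le_csSup hbdd hmem
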